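/- arXiv:2002.10654 — 3 statements merged into one kernel-verified Lean document; each statement's English description precedes it below -/
import Mathlib

section
/- Selection does not admit efficient error reduction: for every n ≥ 3, with XOR_n the parity function on {0,1}^n and D the distribution generated by sampling z uniformly from {0,1}^{n−2}, setting a := XOR_{n−2}(z), sampling a uniform bit b, and outputting a a z with probability 1/100 and b b z with probability 99/100, one has sel_{1/2 − 1/200}(XOR_n, D) ≤ 1 while sel_{1/3}(XOR_n, D) ≥ n−2. -/
open Finset

/-- A deterministic decision tree over alphabet `α`, querying positions `ι`,
with output labels `β`.  A `node i ch` queries position `i` and has one child per symbol. -/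
inductive DTree (α ι β : Type) : Type where
  | leaf : β → DTree α ι β
  | node : ι → (α → DTree α ι β) → DTree α ι β

namespace DTree

/-- The output of the tree on input `x`. -/
def eval {α ι β : Type} : DTree α ι β → (ι → α) → β
  | .leaf b, _ => b
  | .node i ch, x => (ch (x i)).eval x

/-- The depth of a tree: the maximum number of queries along any root-to-leaf path. -/
def depth {α ι β : Type} [Fintype α] : DTree α ι β → ℕ
  | .leaf _ => 0
  | .node _ ch => 1 + Finset.univ.sup fun a => (ch a).depth

/-- `Input(ℓ)` for the leaf `ℓ` reached by `x`: the set of inputs that follow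
the same root-to-leaf path as `x`. -/
def reach {α ι β : Type} : DTree α ι β → (ι → α) → Set (ι → α)
  | .leaf _, _ => Set.univ
  | .node i ch, x => {y | y i = x i} ∩ (ch (x i)).reach x

/-- For a tree on `k` samples, the set `ℓ_j ⊆ Σ^n` of strings consistent with the
queries made to the `j`-th sample on the path followed by input `x`. -/
def reachJ {α β : Type} {k n : ℕ} :
    DTree α (Fin k × Fin n) β → ((Fin k × Fin n) → α) → Fin k → Set (Fin n → α)
  | .leaf _, _, _ => Set.univ
  | .node p ch, x, j =>
      (if p.1 = j then {y : Fin n → α | y p.2 = x p} else Set.univ) ∩ (ch (x p)).reachJ x j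

end DTree

/-- Probability mass of a set `S` under (the mass function of) a distribution `D`. -/
noncomputable def prS {γ : Type} [Fintype γ] (D : γ → ℝ) (S : Set γ) : ℝ :=
  ∑ x, S.indicator D x

/-- `D` is a probability mass function on the finite type `γ`. -/
def IsDist {γ : Type} [Fintype γ] (D : γ → ℝ) : Prop :=
  (∀ x, 0 ≤ D x) ∧ ∑ x, D x = 1

/-- Likelihood ratio `LR(S) = D1(S)/D0(S)`. -/
noncomputable def LR {γ : Type} [Fintype γ] (D0 D1 : γ → ℝ) (S : Set γ) : ℝ :=
  prS D1 S / prS D0 S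

/-- The `k`-fold product distribution `D^k` on `k` samples (input flattened). -/
noncomputable def prodD {α : Type} {n k : ℕ} (D : (Fin n → α) → ℝ) :
    ((Fin k × Fin n) → α) → ℝ :=
  fun x => ∏ j, D fun i => x (j, i)

/-- `T` is a `(δ, M)`-likelihood booster for `D0, D1`. -/
def LBooster {α β : Type} [Fintype α] {n : ℕ}
    (D0 D1 : (Fin n → α) → ℝ) (δ M : ℝ) (T : DTree α (Fin n) β) : Prop :=
  1 - δ ≤ prS D1 {x | M ≤ LR D0 D1 (T.reach x)}

/-- `T` is a `(δ, M)`-overall likelihood booster for `D0^k, D1^k`. -/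
def OBooster {α β : Type} [Fintype α] {n k : ℕ}
    (D0 D1 : (Fin n → α) → ℝ) (δ M : ℝ) (T : DTree α (Fin k × Fin n) β) : Prop :=
  1 - δ ≤ prS (prodD D1) {x | M ≤ ∏ j, LR D0 D1 (T.reachJ x j)}

open scoped Classical in
/-- `T` is a `(δ, ε, M)`-uniform likelihood booster for `D0^k, D1^k`. -/
def UBooster {α β : Type} [Fintype α] {n k : ℕ}
    (D0 D1 : (Fin n → α) → ℝ) (δ ε M : ℝ) (T : DTree α (Fin k × Fin n) β) : Prop :=
  1 - δ ≤ prS (prodD D1)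
    {x | (1 - ε) * k ≤ ((Finset.univ.filter fun j => M ≤ LR D0 D1 (T.reachJ x j)).card : ℝ)}

/-- `D = ½D0 + ½D1` is a balanced input distribution for the partial function `f`:
`D_b` is a distribution supported on `f⁻¹(b)`. -/
def BalancedDist {n : ℕ} (f : (Fin n → Bool) → Option Bool) (D0 D1 : (Fin n → Bool) → ℝ) : Prop :=
  IsDist D0 ∧ IsDist D1 ∧ (∀ x, D0 x ≠ 0 → f x = some false) ∧ ∀ x, D1 x ≠ 0 → f x = some true

/-- `corr_ε(f, D)`: the minimum over `k ≥ 1` of the least depth of a deterministic decision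
tree on `k` samples which, for a uniformly random `b`, on input drawn from `D_b^k`
outputs `b` with probability at least `1 - ε`. -/
noncomputable def corrC {n : ℕ} (ε : ℝ) (D0 D1 : (Fin n → Bool) → ℝ) : ℕ :=
  sInf {q | ∃ k, 0 < k ∧ ∃ T : DTree Bool (Fin k × Fin n) Bool, T.depth ≤ q ∧
    1 - ε ≤ (prS (prodD D0) {x | T.eval x = false} + prS (prodD D1) {x | T.eval x = true}) / 2}

/-- `sel_ε(f, D)`: the minimum over `k ≥ 1` of the least depth of a deterministic decision
tree on `k` samples from `D` outputting a pair `(i, f(xⁱ))` with probability at least `1 - ε`. -/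
noncomputable def selC {n : ℕ} (ε : ℝ) (f : (Fin n → Bool) → Option Bool)
    (D : (Fin n → Bool) → ℝ) : ℕ :=
  sInf {q | ∃ k, 0 < k ∧ ∃ T : DTree Bool (Fin k × Fin n) (Fin k × Bool), T.depth ≤ q ∧
    1 - ε ≤ prS (prodD D) {x | f (fun i => x ((T.eval x).1, i)) = some (T.eval x).2}}

/-- The product distribution `D_{ab}^k = (Da × Db)^k` on `k` pairs of samples. -/
noncomputable def prodD2 {n k : ℕ} (Da Db : (Fin n → Bool) → ℝ) :
    ((Fin k × Fin 2 × Fin n) → Bool) → ℝ :=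
  fun x => ∏ j, (Da fun i => x (j, 0, i)) * Db fun i => x (j, 1, i)

/-- `bicorr_ε(f, D)`: minimum over `k ≥ 1` of the least depth of a deterministic decision tree
that distinguishes `D_{01}^k` (output `false`) from `D_{10}^k` (output `true`) with
probability at least `1 - ε` for a uniformly random choice between the two. -/
noncomputable def bicorrC {n : ℕ} (ε : ℝ) (D0 D1 : (Fin n → Bool) → ℝ) : ℕ :=
  sInf {q | ∃ k, 0 < k ∧ ∃ T : DTree Bool (Fin k × Fin 2 × Fin n) Bool, T.depth ≤ q ∧
    1 - ε ≤ (prS (prodD2 D0 D1) {x | T.eval x = false} +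
             prS (prodD2 D1 D0) {x | T.eval x = true}) / 2}

/-- `R_ε(f)`: randomized query complexity, i.e. the least `q` such that some probability
distribution over deterministic decision trees of depth at most `q` outputs `f x`
with probability at least `1 - ε` for every `x` in the domain of `f`. -/
noncomputable def Rq {ι : Type} (ε : ℝ) (f : (ι → Bool) → Option Bool) : ℕ :=
  sInf {q | ∃ (p : ℕ → ℝ) (Ts : ℕ → DTree Bool ι Bool),
    (∀ i, 0 ≤ p i) ∧ (∑' i, p i) = 1 ∧ (∀ i, (Ts i).depth ≤ q) ∧
    ∀ x b, f x = some b → 1 - ε ≤ ∑' i, if (Ts i).eval x = b then p i else 0}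

/-- `corr_ε(f)`: the maximum of `corr_ε(f, D)` over balanced input distributions `D` for `f`. -/
noncomputable def corrMax {n : ℕ} (ε : ℝ) (f : (Fin n → Bool) → Option Bool) : ℕ :=
  sSup {q | ∃ D0 D1, BalancedDist f D0 D1 ∧ q = corrC ε D0 D1}

/-- `sel_ε(f)`: the maximum of `sel_ε(f, D)` over balanced input distributions `D` for `f`. -/
noncomputable def selMax {n : ℕ} (ε : ℝ) (f : (Fin n → Bool) → Option Bool) : ℕ :=
  sSup {q | ∃ D0 D1, BalancedDist f D0 D1 ∧ q = selC ε f fun x => (D0 x + D1 x) / 2}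
/-- The parity (XOR) of all bits of `x`. -/
def XORn {n : ℕ} (x : Fin n → Bool) : Bool :=
  decide ((Finset.univ.filter fun i => x i = true).card % 2 = 1)

/-- The parity of the bits of `x` in positions `≥ 2`. -/
def XORtail {n : ℕ} (x : Fin n → Bool) : Bool :=
  decide ((Finset.univ.filter fun i : Fin n => 2 ≤ (i : ℕ) ∧ x i = true).card % 2 = 1)

/-- `x` with the bits in block `B` flipped. -/
def flipB {n : ℕ} (x : Fin n → Bool) (B : Finset (Fin n)) : Fin n → Bool :=
  fun i => if i ∈ B then !(x i) else x i

/-- `B` is a sensitive block of `f` on `x`: `x^B` lies in the domain of `f` and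
`f(x^B) ≠ f(x)`. -/
def SensBlock {n : ℕ} (f : (Fin n → Bool) → Option Bool) (x : Fin n → Bool)
    (B : Finset (Fin n)) : Prop :=
  (f (flipB x B)).isSome ∧ f (flipB x B) ≠ f x

/-- Fractional block sensitivity `fbs(f) = max_x fbs(f, x)`, where `fbs(f,x)` is the value
of the fractional packing LP over the sensitive blocks of `x`. -/
noncomputable def fbs {n : ℕ} (f : (Fin n → Bool) → Option Bool) : ℝ :=
  sSup {r | ∃ x, (f x).isSome ∧ ∃ w : Finset (Fin n) → ℝ,
    (∀ B, 0 ≤ w B) ∧ (∀ B, w B ≤ 1) ∧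
    (∀ B, w B ≠ 0 → SensBlock f x B) ∧
    (∀ i, ∑ B ∈ Finset.univ.filter (fun B => i ∈ B), w B ≤ 1) ∧
    r = ∑ B, w B}

/-- The composed partial function `f ∘ g`, defined on `(x¹, …, xⁿ)` when every `xⁱ` is in
the domain of `g`, with value `f(g(x¹), …, g(xⁿ))`. -/
def compFG {n m : ℕ} (f : (Fin n → Bool) → Option Bool) (g : (Fin m → Bool) → Option Bool) :
    ((Fin n × Fin m) → Bool) → Option Bool :=
  fun x =>
    if h : ∀ i, (g fun s => x (i, s)).isSome then
      f fun i => (g fun s => x (i, s)).get (h i)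
    else none

/-- Number of queries that `T` makes into block `B` on input `x` (each query reads one bit
`(i, s)`, and counts if `i ∈ B`). -/
def countQ {m n : ℕ} {β : Type} (B : Finset (Fin n)) :
    DTree Bool (Fin n × Fin m) β → ((Fin n × Fin m) → Bool) → ℕ
  | .leaf _, _ => 0
  | .node p ch, x => (if p.1 ∈ B then 1 else 0) + countQ B (ch (x p)) x

/-- The Shaltiel distribution for `XOR_n`, `n = m + 2`: with probability 99/100 output `0`
followed by `n-1` uniform bits; with probability 1/100 output `1`, one uniform bit, `0^{n-2}`. -/
noncomputable def D16 (m : ℕ) : (Fin (m + 2) → Bool) → ℝ := fun x =>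
  (if x 0 = false then (99 / 100) * ((1:ℝ) / 2) ^ (m + 1) else 0) +
  (if x 0 = true ∧ (∀ i : Fin (m + 2), 2 ≤ (i : ℕ) → x i = false) then 1 / 200 else 0)

/-- The distribution of Theorem 2 for `XOR_n`, `n = m + 3`: sample `z` uniform on `n-2` bits,
`a := XOR(z)`, `b` uniform; output `a a z` w.p. 1/100 and `b b z` w.p. 99/100. -/
noncomputable def D34 (m : ℕ) : (Fin (m + 3) → Bool) → ℝ := fun x =>
  if x 0 = x 1 then
    ((1:ℝ) / 2) ^ (m + 1) * (99 / 200 + if x 0 = XORtail x then 1 / 100 else 0)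
  else 0

/-- A distribution conditioned on `XORn x = b` (for distributions giving each value
probability 1/2). -/
noncomputable def condXOR {n : ℕ} (D : (Fin n → Bool) → ℝ) (b : Bool) : (Fin n → Bool) → ℝ :=
  fun x => if XORn x = b then 2 * D x else 0

section Aux

open DTree Finset

variable {α ι β : Type}

/-- The set of positions queried by `T` on input `x`. -/
def queried [DecidableEq ι] : DTree α ι β → (ι → α) → Finset ι
  | .leaf _, _ => ∅
  | .node i ch, x => insert i (queried (ch (x i)) x)

lemma card_queried_le [Fintype α] [DecidableEq ι] (T : DTree α ι β) (x : ι → α) :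
    (queried T x).card ≤ T.depth := by
  induction T with
  | leaf b => simp [queried, DTree.depth]
  | node i ch ih =>
    show (insert i (queried (ch (x i)) x)).card ≤ 1 + Finset.univ.sup fun a => (ch a).depth
    have h1 := Finset.card_insert_le i (queried (ch (x i)) x)
    have h2 := ih (x i)
    have h3 : (ch (x i)).depth ≤ Finset.univ.sup fun a => (ch a).depth :=
      Finset.le_sup (f := fun a => (ch a).depth) (Finset.mem_univ (x i))
    omega

lemma congr_on_queried [DecidableEq ι] (T : DTree α ι β) (x y : ι → α)
    (h : ∀ i ∈ queried T x, y i = x i) :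
    T.eval y = T.eval x ∧ queried T y = queried T x := by
  induction T with
  | leaf b => exact ⟨rfl, rfl⟩
  | node i ch ih =>
    have hi : y i = x i := h i (Finset.mem_insert_self _ _)
    have h' : ∀ j ∈ queried (ch (x i)) x, y j = x j := fun j hj =>
      h j (Finset.mem_insert_of_mem hj)
    obtain ⟨e1, e2⟩ := ih (x i) h'
    refine ⟨?_, ?_⟩
    · show (ch (y i)).eval y = (ch (x i)).eval x
      rw [hi, e1]
    · show insert i (queried (ch (y i)) y) = insert i (queried (ch (x i)) x)
      rw [hi, e2]

lemma XORn_flip {n : ℕ} (y : Fin n → Bool) (s : Fin n) :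
    XORn (Function.update y s (!(y s))) = !(XORn y) := by
  classical
  unfold XORn
  rw [Finset.card_filter, Finset.card_filter,
    ← Finset.add_sum_erase _ _ (Finset.mem_univ s),
    ← Finset.add_sum_erase _ (fun i => if y i = true then 1 else 0) (Finset.mem_univ s)]
  have he : ∀ i ∈ Finset.univ.erase s,
      (if Function.update y s (!(y s)) i = true then 1 else 0)
        = (if y i = true then 1 else 0) := by
    intro i hi
    rw [Function.update_of_ne (Finset.ne_of_mem_erase hi)]
  rw [Finset.sum_congr rfl he, Function.update_self]
  set C := ∑ i ∈ Finset.univ.erase s, (if y i = true then 1 else 0) with hC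
  rcases Nat.mod_two_eq_zero_or_one C with h | h <;>
    cases hys : y s <;>
      simp [hys, Nat.add_mod, h]

lemma D34_nonneg (m : ℕ) (x : Fin (m+3) → Bool) : 0 ≤ D34 m x := by
  unfold D34; split_ifs <;> positivity

lemma D34_flip (m : ℕ) (y : Fin (m+3) → Bool) (s : Fin (m+3)) (hs : 2 ≤ (s : ℕ)) :
    99 * D34 m y ≤ 101 * D34 m (Function.update y s (!(y s))) := by
  have hs0 : (0 : Fin (m+3)) ≠ s := by
    intro h; rw [← h] at hs; simp at hs
  have hs1 : (1 : Fin (m+3)) ≠ s := by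
    intro h; rw [← h] at hs; simp [Fin.val_one] at hs
  have h0 : Function.update y s (!(y s)) 0 = y 0 := Function.update_of_ne hs0 _ _
  have h1 : Function.update y s (!(y s)) 1 = y 1 := Function.update_of_ne hs1 _ _
  unfold D34
  rw [h0, h1]
  by_cases h : y 0 = y 1
  · rw [if_pos h, if_pos h]
    have hc : (0:ℝ) < ((1:ℝ)/2)^(m+1) := by positivity
    split_ifs <;> nlinarith
  · rw [if_neg h, if_neg h]; norm_num

lemma prodD_nonneg {n k : ℕ} (x : (Fin k × Fin n) → Bool)
    {D : (Fin n → Bool) → ℝ} (hD : ∀ y, 0 ≤ D y) : 0 ≤ prodD D x :=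
  Finset.prod_nonneg fun j _ => hD _

lemma sum_prodD {n : ℕ} (k : ℕ) (D : (Fin n → Bool) → ℝ) (hD : ∑ y, D y = 1) :
    ∑ x : (Fin k × Fin n) → Bool, prodD D x = 1 := by
  rw [← Equiv.sum_comp (Equiv.curry (Fin k) (Fin n) Bool).symm (fun x => prodD (k := k) D x)]
  have h1 : ∀ y : Fin k → Fin n → Bool,
      prodD (k := k) D ((Equiv.curry (Fin k) (Fin n) Bool).symm y) = ∏ j, D (y j) :=
    fun y => rfl
  rw [Fintype.sum_congr _ _ h1, ← Fintype.prod_sum (fun (_ : Fin k) (c : Fin n → Bool) => D c)]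
  simp [hD]

lemma prS_eq_sum {γ : Type} [Fintype γ] (D : γ → ℝ) (S : Set γ) [DecidablePred (· ∈ S)] :
    prS D S = ∑ x ∈ Finset.univ.filter (· ∈ S), D x := by
  unfold prS
  rw [Finset.sum_filter]
  refine Finset.sum_congr rfl fun x _ => ?_
  simp [Set.indicator_apply]

end Aux
section Aux2

open Finset

variable {m : ℕ}

/-- Assemble an input from the first two bits and the tail. -/
def tri (a b : Bool) (z : Fin (m+1) → Bool) : Fin (m+3) → Bool :=
  fun i => if _h0 : (i : ℕ) = 0 then a else if _h1 : (i : ℕ) = 1 then b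
    else z ⟨(i : ℕ) - 2, by have := i.isLt; omega⟩

lemma tri_zero (a b : Bool) (z : Fin (m+1) → Bool) : tri a b z 0 = a := by
  simp [tri]

lemma tri_one (a b : Bool) (z : Fin (m+1) → Bool) : tri a b z 1 = b := by
  simp [tri, Fin.val_one]

lemma tri_one' (a b : Bool) (z : Fin (m+1) → Bool) :
    tri a b z (Fin.succ (0 : Fin (m+2))) = b := by
  simp [tri]

lemma tri_two (a b : Bool) (z : Fin (m+1) → Bool) (i : Fin (m+1)) :
    tri a b z i.succ.succ = z i := by
  unfold tri
  rw [dif_neg (by simp [Fin.val_succ]), dif_neg (by simp [Fin.val_succ])]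
  congr 1

lemma tri_bij : Function.Bijective
    (fun t : Bool × Bool × (Fin (m+1) → Bool) => tri t.1 t.2.1 t.2.2) := by
  rw [Fintype.bijective_iff_injective_and_card]
  constructor
  · rintro ⟨a, b, z⟩ ⟨a', b', z'⟩ h
    simp only [Prod.mk.injEq]
    refine ⟨?_, ?_, ?_⟩
    · simpa [tri_zero] using congrFun h 0
    · simpa [tri_one] using congrFun h 1
    · funext i
      simpa [tri_two] using congrFun h i.succ.succ
  · simp only [Fintype.card_prod, Fintype.card_bool, Fintype.card_fun, Fintype.card_fin]
    ring

lemma sum_cube (F : (Fin (m+3) → Bool) → ℝ) :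
    ∑ x, F x = ∑ a : Bool, ∑ b : Bool, ∑ z : Fin (m+1) → Bool, F (tri a b z) := by
  rw [← Function.Bijective.sum_comp tri_bij F, Fintype.sum_prod_type]
  refine Fintype.sum_congr _ _ fun a => ?_
  rw [Fintype.sum_prod_type]

lemma XORtail_tri (a b : Bool) (z : Fin (m+1) → Bool) :
    XORtail (tri a b z) = XORn z := by
  unfold XORtail XORn
  have hc : (Finset.univ.filter fun i : Fin (m+3) => 2 ≤ (i : ℕ) ∧ tri a b z i = true).card
      = (Finset.univ.filter fun i : Fin (m+1) => z i = true).card := by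
    rw [Finset.card_filter, Finset.card_filter, Fin.sum_univ_succ, Fin.sum_univ_succ]
    have h0 : (if 2 ≤ ((0 : Fin (m+3)) : ℕ) ∧ tri a b z 0 = true then 1 else 0) = 0 := by
      simp
    have h1 : (if 2 ≤ ((Fin.succ (0 : Fin (m+2))) : ℕ) ∧ tri a b z (Fin.succ 0) = true
        then 1 else 0) = 0 := by
      simp
    have h2 : ∀ i : Fin (m+1),
        (if 2 ≤ ((i.succ.succ : Fin (m+3)) : ℕ) ∧ tri a b z i.succ.succ = true then 1 else 0)
          = if z i = true then 1 else 0 := by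
      intro i
      rw [tri_two]
      have hle : 2 ≤ ((i.succ.succ : Fin (m+3)) : ℕ) := by
        rw [Fin.val_succ, Fin.val_succ]; omega
      simp [hle]
    rw [h0, h1, Finset.sum_congr rfl fun i _ => h2 i]
    omega
  rw [hc]

lemma XORn_tri (a : Bool) (z : Fin (m+1) → Bool) : XORn (tri a a z) = XORn z := by
  unfold XORn
  have hc : (Finset.univ.filter fun i : Fin (m+3) => tri a a z i = true).card
      = ((if a = true then 1 else 0) + (if a = true then 1 else 0)
        + (Finset.univ.filter fun i : Fin (m+1) => z i = true).card) := by
    rw [Finset.card_filter, Finset.card_filter, Fin.sum_univ_succ, Fin.sum_univ_succ]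
    rw [show tri a a z 0 = a from tri_zero a a z,
      show tri a a z (Fin.succ (0 : Fin (m+2))) = a from tri_one' a a z]
    rw [Finset.sum_congr rfl fun i _ => by rw [tri_two]]
    omega
  rw [hc]
  set C := (Finset.univ.filter fun i : Fin (m+1) => z i = true).card
  have : ((if a = true then 1 else 0) + (if a = true then 1 else 0) + C) % 2 = C % 2 := by
    split_ifs <;> omega
  rw [this]

lemma sum_D34 (m : ℕ) : ∑ x, D34 m x = 1 := by
  rw [sum_cube (D34 m)]
  have hval : ∀ (a b : Bool) (z : Fin (m+1) → Bool), D34 m (tri a b z)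
      = if a = b then ((1:ℝ)/2)^(m+1) * (99/200 + if a = XORn z then 1/100 else 0) else 0 := by
    intro a b z
    unfold D34
    rw [tri_zero, tri_one, XORtail_tri]
  simp only [hval]
  rw [Fintype.sum_bool]
  simp only [Fintype.sum_bool]
  norm_num
  rw [← Finset.sum_add_distrib]
  have hz : ∀ z : Fin (m+1) → Bool,
      (((1:ℝ)/2)^(m+1) * (99/200 + if XORn z = true then 1/100 else 0)
        + ((1:ℝ)/2)^(m+1) * (99/200 + if XORn z = false then 1/100 else 0))
        = ((1:ℝ)/2)^(m+1) := by
    intro z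
    cases h : XORn z <;> simp [h] <;> ring
  rw [Finset.sum_congr rfl fun z _ => hz z, Finset.sum_const, Finset.card_univ,
    Fintype.card_fun, Fintype.card_bool, Fintype.card_fin, nsmul_eq_mul]
  push_cast
  rw [one_div, inv_pow, mul_inv_cancel₀ (by positivity)]

end Aux2
section Aux3

open DTree Finset

variable {m k : ℕ}

lemma card_tail (m : ℕ) :
    (Finset.univ.filter fun s : Fin (m+3) => 2 ≤ (s : ℕ)).card = m + 1 := by
  rw [Finset.card_filter, Fin.sum_univ_succ, Fin.sum_univ_succ]
  have h0 : (if 2 ≤ ((0 : Fin (m+3)) : ℕ) then 1 else 0) = 0 := by simp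
  have h1 : (if 2 ≤ ((Fin.succ (0 : Fin (m+2))) : ℕ) then 1 else 0) = 0 := by simp
  have h2 : ∀ i : Fin (m+1), (if 2 ≤ ((i.succ.succ : Fin (m+3)) : ℕ) then 1 else 0) = 1 := by
    intro i
    rw [if_pos]
    rw [Fin.val_succ, Fin.val_succ]; omega
  rw [h0, h1, Finset.sum_congr rfl fun i _ => h2 i, Finset.sum_const, Finset.card_univ,
    Fintype.card_fin, smul_eq_mul, mul_one]
  omega

/-- The set of tail positions of the output sample not queried on input `x`. -/
def Ffil (T : DTree Bool (Fin k × Fin (m+3)) (Fin k × Bool))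
    (x : (Fin k × Fin (m+3)) → Bool) : Finset (Fin (m+3)) :=
  Finset.univ.filter fun s => 2 ≤ (s : ℕ) ∧ ((T.eval x).1, s) ∉ queried T x

lemma Ffil_ne (T : DTree Bool (Fin k × Fin (m+3)) (Fin k × Bool)) (hd : T.depth ≤ m)
    (x : (Fin k × Fin (m+3)) → Bool) : (Ffil T x).Nonempty := by
  by_contra hemp
  rw [Finset.not_nonempty_iff_eq_empty, Ffil, Finset.filter_eq_empty_iff] at hemp
  have hall : ∀ s ∈ Finset.univ.filter fun s : Fin (m+3) => 2 ≤ (s : ℕ),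
      ((T.eval x).1, s) ∈ queried T x := by
    intro s hs
    have := hemp (Finset.mem_univ s)
    by_contra hns
    exact this ⟨(Finset.mem_filter.mp hs).2, hns⟩
  have hinj : Set.InjOn (fun s => ((T.eval x).1, s))
      ((Finset.univ.filter fun s : Fin (m+3) => 2 ≤ (s : ℕ)) :
        Set (Fin (m+3))) := by
    intro s _ t _ hst
    exact ((Prod.mk.injEq _ _ _ _).mp hst).2
  have hle := Finset.card_le_card_of_injOn _ hall hinj
  have hq := card_queried_le T x
  rw [card_tail m] at hle
  omega

/-- The least unqueried tail position of the output sample. -/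
noncomputable def sfl (T : DTree Bool (Fin k × Fin (m+3)) (Fin k × Bool)) (hd : T.depth ≤ m)
    (x : (Fin k × Fin (m+3)) → Bool) : Fin (m+3) :=
  (Ffil T x).min' (Ffil_ne T hd x)

/-- Flip the least unqueried tail bit of the output sample. -/
noncomputable def Phi (T : DTree Bool (Fin k × Fin (m+3)) (Fin k × Bool)) (hd : T.depth ≤ m)
    (x : (Fin k × Fin (m+3)) → Bool) : (Fin k × Fin (m+3)) → Bool :=
  Function.update x ((T.eval x).1, sfl T hd x) (!(x ((T.eval x).1, sfl T hd x)))

variable (T : DTree Bool (Fin k × Fin (m+3)) (Fin k × Bool)) (hd : T.depth ≤ m)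

lemma sfl_mem (x : (Fin k × Fin (m+3)) → Bool) : sfl T hd x ∈ Ffil T x :=
  Finset.min'_mem _ _

lemma sfl_two (x : (Fin k × Fin (m+3)) → Bool) : 2 ≤ ((sfl T hd x : Fin (m+3)) : ℕ) :=
  (Finset.mem_filter.mp (sfl_mem T hd x)).2.1

lemma sfl_nq (x : (Fin k × Fin (m+3)) → Bool) :
    ((T.eval x).1, sfl T hd x) ∉ queried T x :=
  (Finset.mem_filter.mp (sfl_mem T hd x)).2.2

lemma Phi_agree (x : (Fin k × Fin (m+3)) → Bool) :
    ∀ p ∈ queried T x, Phi T hd x p = x p := by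
  intro p hp
  apply Function.update_of_ne
  intro hpe
  exact sfl_nq T hd x (hpe ▸ hp)

lemma Phi_stab (x : (Fin k × Fin (m+3)) → Bool) :
    T.eval (Phi T hd x) = T.eval x ∧ queried T (Phi T hd x) = queried T x :=
  congr_on_queried T x (Phi T hd x) (Phi_agree T hd x)

lemma Ffil_stab (x : (Fin k × Fin (m+3)) → Bool) : Ffil T (Phi T hd x) = Ffil T x := by
  unfold Ffil
  rw [(Phi_stab T hd x).1, (Phi_stab T hd x).2]

lemma sfl_stab (x : (Fin k × Fin (m+3)) → Bool) : sfl T hd (Phi T hd x) = sfl T hd x := by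
  have h1 : sfl T hd (Phi T hd x) ∈ Ffil T x := Ffil_stab T hd x ▸ sfl_mem T hd (Phi T hd x)
  have h2 : sfl T hd x ∈ Ffil T (Phi T hd x) := (Ffil_stab T hd x).symm ▸ sfl_mem T hd x
  exact le_antisymm (Finset.min'_le _ _ h2) (Finset.min'_le _ _ h1)

lemma Phi_invol (x : (Fin k × Fin (m+3)) → Bool) : Phi T hd (Phi T hd x) = x := by
  show Function.update (Phi T hd x) ((T.eval (Phi T hd x)).1, sfl T hd (Phi T hd x))
    (!(Phi T hd x ((T.eval (Phi T hd x)).1, sfl T hd (Phi T hd x)))) = x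
  rw [(Phi_stab T hd x).1, sfl_stab T hd x]
  have hval : Phi T hd x ((T.eval x).1, sfl T hd x) = !(x ((T.eval x).1, sfl T hd x)) := by
    show Function.update x ((T.eval x).1, sfl T hd x) (!(x ((T.eval x).1, sfl T hd x)))
      ((T.eval x).1, sfl T hd x) = _
    rw [Function.update_self]
  rw [hval, Bool.not_not]
  show Function.update (Function.update x ((T.eval x).1, sfl T hd x)
    (!(x ((T.eval x).1, sfl T hd x)))) ((T.eval x).1, sfl T hd x)
    (x ((T.eval x).1, sfl T hd x)) = x
  rw [Function.update_idem, Function.update_eq_self]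

lemma Phi_comp (x : (Fin k × Fin (m+3)) → Bool) :
    (fun i => Phi T hd x ((T.eval x).1, i))
      = Function.update (fun i => x ((T.eval x).1, i)) (sfl T hd x)
          (!(x ((T.eval x).1, sfl T hd x))) := by
  funext i
  show Function.update x ((T.eval x).1, sfl T hd x) (!(x ((T.eval x).1, sfl T hd x)))
    ((T.eval x).1, i) = _
  rw [Function.update_apply, Function.update_apply]
  by_cases hi : i = sfl T hd x
  · rw [if_pos hi, if_pos (by rw [hi])]
  · rw [if_neg hi, if_neg fun hpe => hi (congrArg Prod.snd hpe)]

lemma Phi_notS (x : (Fin k × Fin (m+3)) → Bool)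
    (hx : some (XORn fun i => x ((T.eval x).1, i)) = some (T.eval x).2)
    (hx' : some (XORn fun i => Phi T hd x ((T.eval (Phi T hd x)).1, i))
      = some (T.eval (Phi T hd x)).2) : False := by
  rw [(Phi_stab T hd x).1] at hx'
  rw [Phi_comp T hd x] at hx'
  have hflip := XORn_flip (fun i => x ((T.eval x).1, i)) (sfl T hd x)
  rw [show (!((fun i => x ((T.eval x).1, i)) (sfl T hd x))) = (!(x ((T.eval x).1, sfl T hd x)))
    from rfl] at hflip
  rw [hflip] at hx'
  have h1 := Option.some.inj hx
  have h2 := Option.some.inj hx'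
  rw [h1] at h2
  exact (Bool.not_ne_self _) h2

lemma mass_le (x : (Fin k × Fin (m+3)) → Bool) :
    99 * prodD (D34 m) x ≤ 101 * prodD (D34 m) (Phi T hd x) := by
  unfold prodD
  rw [← Finset.mul_prod_erase Finset.univ (fun j => D34 m fun i => x (j, i))
      (Finset.mem_univ (T.eval x).1),
    ← Finset.mul_prod_erase Finset.univ (fun j => D34 m fun i => Phi T hd x (j, i))
      (Finset.mem_univ (T.eval x).1)]
  beta_reduce
  have hrest : (∏ j ∈ Finset.univ.erase (T.eval x).1, D34 m fun i => Phi T hd x (j, i))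
      = ∏ j ∈ Finset.univ.erase (T.eval x).1, D34 m fun i => x (j, i) := by
    refine Finset.prod_congr rfl fun j hj => ?_
    congr 1
    funext i
    exact Function.update_of_ne
      (fun hpe => (Finset.ne_of_mem_erase hj) (congrArg Prod.fst hpe)) _ _
  rw [hrest, Phi_comp T hd x]
  have hD := D34_flip m (fun i => x ((T.eval x).1, i)) (sfl T hd x) (sfl_two T hd x)
  beta_reduce at hD
  have hR : (0:ℝ) ≤ ∏ j ∈ Finset.univ.erase (T.eval x).1, D34 m fun i => x (j, i) :=
    Finset.prod_nonneg fun j _ => D34_nonneg m _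
  have hA : (0:ℝ) ≤ D34 m (fun i => x ((T.eval x).1, i)) := D34_nonneg m _
  nlinarith [hD, hR, hA]

lemma success_bound (T : DTree Bool (Fin k × Fin (m+3)) (Fin k × Bool)) (hd : T.depth ≤ m) :
    prS (prodD (D34 m))
      {x | some (XORn fun i => x ((T.eval x).1, i)) = some (T.eval x).2} ≤ 101/200 := by
  classical
  set Sf : Finset ((Fin k × Fin (m+3)) → Bool) :=
    Finset.univ.filter
      (fun x => some (XORn fun i => x ((T.eval x).1, i)) = some (T.eval x).2) with hSf
  have hPS : prS (prodD (D34 m))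
      {x | some (XORn fun i => x ((T.eval x).1, i)) = some (T.eval x).2}
      = ∑ x ∈ Sf, prodD (D34 m) x := by
    unfold prS
    rw [hSf, Finset.sum_filter]
    refine Finset.sum_congr rfl fun x _ => ?_
    rw [Set.indicator_apply]
    split_ifs with h1 h2 h3 <;>
      first
      | rfl
      | exact absurd h1 h2
      | exact absurd h3 h1
      | exact absurd h1 h3
      | exact absurd h2 h1
  rw [hPS]
  have hnn : ∀ x : (Fin k × Fin (m+3)) → Bool, 0 ≤ prodD (D34 m) x :=
    fun x => prodD_nonneg x (D34_nonneg m)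
  have htot := sum_prodD (n := m+3) k (D34 m) (sum_D34 m)
  have hstep : ∑ x ∈ Sf, (99:ℝ) * prodD (D34 m) x
      ≤ ∑ x ∈ Sf, 101 * prodD (D34 m) (Phi T hd x) :=
    Finset.sum_le_sum fun x _ => mass_le T hd x
  have hinj : ∀ a ∈ Sf, ∀ b ∈ Sf, Phi T hd a = Phi T hd b → a = b := by
    intro a _ b _ h
    rw [← Phi_invol T hd a, h, Phi_invol T hd b]
  have himg : ∑ x ∈ Sf, prodD (D34 m) (Phi T hd x)
      = ∑ y ∈ Sf.image (Phi T hd), prodD (D34 m) y :=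
    (Finset.sum_image hinj).symm
  have hsub : Sf.image (Phi T hd) ⊆ Finset.univ \ Sf := by
    intro y hy
    obtain ⟨x, hx, rfl⟩ := Finset.mem_image.mp hy
    rw [Finset.mem_sdiff]
    refine ⟨Finset.mem_univ _, fun hmem => ?_⟩
    exact Phi_notS T hd x (Finset.mem_filter.mp hx).2 (Finset.mem_filter.mp hmem).2
  have hle2 : ∑ y ∈ Sf.image (Phi T hd), prodD (D34 m) y
      ≤ ∑ y ∈ Finset.univ \ Sf, prodD (D34 m) y :=
    Finset.sum_le_sum_of_subset_of_nonneg hsub fun y _ _ => hnn y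
  have hsplit : ∑ y ∈ Finset.univ \ Sf, prodD (D34 m) y + ∑ x ∈ Sf, prodD (D34 m) x = 1 := by
    rw [Finset.sum_sdiff (Finset.subset_univ Sf)]
    exact htot
  have e1 : (99:ℝ) * ∑ x ∈ Sf, prodD (D34 m) x = ∑ x ∈ Sf, 99 * prodD (D34 m) x :=
    Finset.mul_sum _ _ _
  have e2 : (101:ℝ) * ∑ x ∈ Sf, prodD (D34 m) (Phi T hd x)
      = ∑ x ∈ Sf, 101 * prodD (D34 m) (Phi T hd x) := Finset.mul_sum _ _ _
  have hfin : (99:ℝ) * ∑ x ∈ Sf, prodD (D34 m) x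
      ≤ 101 * (1 - ∑ x ∈ Sf, prodD (D34 m) x) := by
    calc (99:ℝ) * ∑ x ∈ Sf, prodD (D34 m) x
        = ∑ x ∈ Sf, 99 * prodD (D34 m) x := e1
      _ ≤ ∑ x ∈ Sf, 101 * prodD (D34 m) (Phi T hd x) := hstep
      _ = 101 * ∑ x ∈ Sf, prodD (D34 m) (Phi T hd x) := e2.symm
      _ = 101 * ∑ y ∈ Sf.image (Phi T hd), prodD (D34 m) y := by rw [himg]
      _ ≤ 101 * ∑ y ∈ Finset.univ \ Sf, prodD (D34 m) y := by linarith [hle2]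
      _ = 101 * (1 - ∑ x ∈ Sf, prodD (D34 m) x) := by
          have : ∑ y ∈ Finset.univ \ Sf, prodD (D34 m) y
              = 1 - ∑ x ∈ Sf, prodD (D34 m) x := by linarith [hsplit]
          rw [this]
  linarith

end Aux3
section Aux4

open DTree Finset

/-- A full decision tree querying every position in the list, then answering `g`. -/
def fullT {ι β : Type} [DecidableEq ι] (g : (ι → Bool) → β) :
    List ι → (ι → Bool) → DTree Bool ι β
  | [], y => .leaf (g y)
  | i :: l, y => .node i fun a => fullT g l (Function.update y i a)

lemma fullT_depth {ι β : Type} [DecidableEq ι] (g : (ι → Bool) → β) :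
    ∀ (l : List ι) (y : ι → Bool), (fullT g l y).depth ≤ l.length
  | [], y => by simp [fullT, DTree.depth]
  | i :: l, y => by
    show 1 + (Finset.univ.sup fun a => (fullT g l (Function.update y i a)).depth)
      ≤ l.length + 1
    have h : (Finset.univ.sup fun a => (fullT g l (Function.update y i a)).depth)
        ≤ l.length := Finset.sup_le fun a _ => fullT_depth g l _
    omega

lemma fullT_eval {ι β : Type} [DecidableEq ι] (g : (ι → Bool) → β) :
    ∀ (l : List ι) (y x : ι → Bool), (∀ i, i ∉ l → y i = x i) →
      (fullT g l y).eval x = g x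
  | [], y, x, h => by
    show g y = g x
    congr 1
    funext i
    exact h i List.not_mem_nil
  | i :: l, y, x, h => by
    show (fullT g l (Function.update y i (x i))).eval x = g x
    apply fullT_eval
    intro j hj
    by_cases hji : j = i
    · subst hji; simp
    · rw [Function.update_of_ne hji]
      exact h j (by simp [hj, hji])

def toK1 {n : ℕ} (y : Fin n → Bool) : (Fin 1 × Fin n) → Bool := fun p => y p.2

lemma toK1_bij {n : ℕ} : Function.Bijective (toK1 (n := n)) := by
  constructor
  · intro y y' h
    funext i
    exact congrFun h (0, i)
  · intro x
    refine ⟨fun i => x (0, i), ?_⟩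
    funext p
    obtain ⟨j, i⟩ := p
    rw [Subsingleton.elim j 0]
    rfl

lemma prS_k1 {m : ℕ} (S : Set ((Fin 1 × Fin (m+3)) → Bool)) [DecidablePred (· ∈ S)] :
    prS (prodD (D34 m)) S
      = ∑ y : Fin (m+3) → Bool, if toK1 y ∈ S then D34 m y else 0 := by
  unfold prS
  rw [← Function.Bijective.sum_comp toK1_bij]
  refine Fintype.sum_congr _ _ fun y => ?_
  rw [Set.indicator_apply]
  have hprod : prodD (D34 m) (toK1 y) = D34 m y := by
    show (∏ j : Fin 1, D34 m fun i => toK1 y (j, i)) = D34 m y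
    rw [Fin.prod_univ_one]
    rfl
  split_ifs with h1 h2 <;> first | rw [hprod] | rfl | exact absurd h1 h2 | exact absurd h2 h1

lemma sum_upper (m : ℕ) :
    (∑ y : Fin (m+3) → Bool, if XORn y = y 0 then D34 m y else 0) = 101/200 := by
  rw [sum_cube (fun y => if XORn y = y 0 then D34 m y else 0)]
  have hterm : ∀ (a b : Bool) (z : Fin (m+1) → Bool),
      (if XORn (tri a b z) = tri a b z 0 then D34 m (tri a b z) else 0)
        = if a = b then (if XORn z = a then ((1:ℝ)/2)^(m+1) * (101/200) else 0) else 0 := by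
    intro a b z
    by_cases hab : a = b
    · subst hab
      rw [if_pos rfl, XORn_tri, tri_zero]
      unfold D34
      rw [tri_zero, tri_one, XORtail_tri, if_pos rfl]
      by_cases h : XORn z = a
      · rw [if_pos h, if_pos h, if_pos (by rw [h])]
        ring
      · rw [if_neg h, if_neg h]
    · rw [if_neg hab]
      unfold D34
      rw [tri_zero, tri_one, if_neg hab]
      simp
  simp only [hterm]
  rw [Fintype.sum_bool]
  simp only [Fintype.sum_bool]
  norm_num
  have hz2 : ∀ z : Fin (m+1) → Bool,
      ((if XORn z = true then ((1:ℝ)/2)^(m+1) * (101/200) else 0)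
        + (if XORn z = false then ((1:ℝ)/2)^(m+1) * (101/200) else 0))
        = ((1:ℝ)/2)^(m+1) * (101/200) := by
    intro z
    cases h : XORn z <;> simp [h]
  rw [← Finset.sum_add_distrib, Finset.sum_congr rfl fun z _ => hz2 z, Finset.sum_const,
    Finset.card_univ, Fintype.card_fun, Fintype.card_bool, Fintype.card_fin, nsmul_eq_mul]
  push_cast
  rw [← mul_assoc, one_div, inv_pow, mul_inv_cancel₀ (by positivity), one_mul]

end Aux4

/-- Selection does not admit efficient error reduction: for the
distribution `D34 m` on `n = m + 3 ≥ 3` bits, `sel_{1/2 − 1/200}(XOR_n, D) ≤ 1` while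
`sel_{1/3}(XOR_n, D) ≥ n − 2`. -/
theorem sel_no_error_reduction :
    ∀ m : ℕ,
      selC (1/2 - 1/200) (fun x => some (XORn x)) (D34 m) ≤ 1 ∧
      m + 1 ≤ selC (1/3) (fun x => some (XORn x)) (D34 m) := by
  intro m
  classical
  constructor
  · -- upper bound: depth-1 tree querying bit 0 of sample 1
    apply Nat.sInf_le
    refine ⟨1, one_pos,
      DTree.node ((0 : Fin 1), (0 : Fin (m+3))) (fun a => DTree.leaf ((0 : Fin 1), a)), ?_, ?_⟩
    · show 1 + (Finset.univ.sup fun _ : Bool => (0:ℕ)) ≤ 1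
      simp
    · show (1:ℝ) - (1/2 - 1/200) ≤ prS (prodD (D34 m))
        {x : (Fin 1 × Fin (m+3)) → Bool |
          some (XORn fun i => x ((0 : Fin 1), i)) = some (x ((0 : Fin 1), (0 : Fin (m+3))))}
      rw [prS_k1]
      have hcond : ∀ y : Fin (m+3) → Bool,
          (if toK1 y ∈ {x : (Fin 1 × Fin (m+3)) → Bool |
              some (XORn fun i => x ((0 : Fin 1), i)) = some (x ((0 : Fin 1), (0 : Fin (m+3))))}
            then D34 m y else 0)
          = if XORn y = y 0 then D34 m y else 0 := by
        intro y
        exact if_congr ⟨fun h => Option.some.inj h, fun h => congrArg some h⟩ rfl rfl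
      rw [Fintype.sum_congr _ _ hcond, sum_upper]
      norm_num
  · -- lower bound
    apply le_csInf
    · refine ⟨Fintype.card (Fin 1 × Fin (m+3)),
        1, one_pos, fullT (fun x : (Fin 1 × Fin (m+3)) → Bool => ((0 : Fin 1), XORn fun i => x ((0 : Fin 1), i)))
          Finset.univ.toList (fun _ => false), ?_, ?_⟩
      · calc (fullT _ Finset.univ.toList fun _ => false).depth
            ≤ Finset.univ.toList.length := fullT_depth _ _ _
          _ = Fintype.card (Fin 1 × Fin (m+3)) := by
              rw [Finset.length_toList, Finset.card_univ]
      · have heval : ∀ x : (Fin 1 × Fin (m+3)) → Bool, (fullT (fun x : (Fin 1 × Fin (m+3)) → Bool => ((0 : Fin 1), XORn fun i => x ((0 : Fin 1), i)))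
            Finset.univ.toList (fun _ => false)).eval x
            = ((0 : Fin 1), XORn fun i => x ((0 : Fin 1), i)) := by
          intro x
          apply fullT_eval
          intro i hi
          exact absurd (Finset.mem_toList.mpr (Finset.mem_univ i)) hi
        have hset : {x : (Fin 1 × Fin (m+3)) → Bool |
            some (XORn fun i => x (((fullT (fun x : (Fin 1 × Fin (m+3)) → Bool => ((0 : Fin 1), XORn fun i => x ((0 : Fin 1), i)))
              Finset.univ.toList (fun _ => false)).eval x).1, i))
              = some ((fullT (fun x : (Fin 1 × Fin (m+3)) → Bool => ((0 : Fin 1), XORn fun i => x ((0 : Fin 1), i)))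
              Finset.univ.toList (fun _ => false)).eval x).2} = Set.univ := by
          ext x
          simp [heval x]
        show (1:ℝ) - 1/3 ≤ prS (prodD (D34 m)) _
        rw [hset]
        have : prS (prodD (D34 m)) (Set.univ : Set ((Fin 1 × Fin (m+3)) → Bool)) = 1 := by
          unfold prS
          rw [Set.indicator_univ]
          exact sum_prodD 1 (D34 m) (sum_D34 m)
        rw [this]
        norm_num
    · rintro q ⟨k, hk, T, hdT, hsucc⟩
      by_contra hlt
      push_neg at hlt
      have hd : T.depth ≤ m := by omega
      have hub := success_bound T hd
      have hsucc' : (1:ℝ) - 1/3 ≤ prS (prodD (D34 m))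
          {x | some (XORn fun i => x ((T.eval x).1, i)) = some (T.eval x).2} := hsucc
      linarith
end

section
/- For all real numbers M ≥ 0 and all real t with 0 < t ≤ e^M: t·ln t − (t − 1) ≥ (1/(M + 2)) · t · (ln t)². -/
/-- For all `M ≥ 0` and `0 < t ≤ e^M`:
`t·ln t − (t − 1) ≥ (1/(M+2)) · t · (ln t)²`. -/
theorem helper_inequality (M t : ℝ) (hM : 0 ≤ M) (ht0 : 0 < t) (ht : t ≤ Real.exp M) :
    (1 / (M + 2)) * (t * Real.log t ^ 2) ≤ t * Real.log t - (t - 1) := by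
  have hM2 : (0:ℝ) < M + 2 := by linarith
  set g : ℝ → ℝ := fun s => s * Real.exp s - Real.exp s + 1 - (s ^ 2 * Real.exp s) / (M + 2)
    with hg
  have hderiv : ∀ s : ℝ, HasDerivAt g (s * Real.exp s * (M - s) / (M + 2)) s := by
    intro s
    have h1 : HasDerivAt (fun s : ℝ => s * Real.exp s) (1 * Real.exp s + s * Real.exp s) s :=
      (hasDerivAt_id s).mul (Real.hasDerivAt_exp s)
    have h2 : HasDerivAt (fun s : ℝ => s ^ 2 * Real.exp s)
        ((2 * s ^ 1) * Real.exp s + s ^ 2 * Real.exp s) s := by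
      simpa using (hasDerivAt_pow 2 s).fun_mul (Real.hasDerivAt_exp s)
    have := ((h1.sub (Real.hasDerivAt_exp s)).add_const 1).sub (h2.div_const (M + 2))
    refine this.congr_deriv ?_
    field_simp
    ring
  have hcont : Continuous g := by
    rw [hg]; fun_prop
  have hg0 : g 0 = 0 := by simp [hg]
  have key : ∀ s : ℝ, s ≤ M → 0 ≤ g s := by
    intro s hs
    rcases le_or_gt 0 s with h0 | h0
    · have hmono : MonotoneOn g (Set.Icc 0 M) := by
        apply monotoneOn_of_deriv_nonneg (convex_Icc 0 M) hcont.continuousOn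
        · intro x hx
          exact (hderiv x).differentiableAt.differentiableWithinAt
        · intro x hx
          rw [interior_Icc] at hx
          rw [(hderiv x).deriv]
          have := Real.exp_pos x
          have h1 : 0 ≤ x * Real.exp x * (M - x) := by
            apply mul_nonneg (mul_nonneg hx.1.le this.le)
            linarith [hx.2]
          positivity
      have := hmono (Set.mem_Icc.mpr ⟨le_refl 0, hM⟩) (Set.mem_Icc.mpr ⟨h0, hs⟩) h0
      linarith [hg0 ▸ this]
    · have hanti : AntitoneOn g (Set.Iic 0) := by
        apply antitoneOn_of_deriv_nonpos (convex_Iic 0) hcont.continuousOn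
        · intro x hx
          exact (hderiv x).differentiableAt.differentiableWithinAt
        · intro x hx
          rw [interior_Iic] at hx
          rw [(hderiv x).deriv]
          have hex := Real.exp_pos x
          have h1 : x * Real.exp x * (M - x) ≤ 0 := by
            apply mul_nonpos_of_nonpos_of_nonneg
            · exact mul_nonpos_of_nonpos_of_nonneg (le_of_lt hx) hex.le
            · linarith [Set.mem_Iio.mp hx]
          exact div_nonpos_of_nonpos_of_nonneg h1 hM2.le
      have := hanti (Set.mem_Iic.mpr h0.le) (Set.mem_Iic.mpr (le_refl 0)) h0.le
      linarith [hg0 ▸ this]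
  have hsM : Real.log t ≤ M := (Real.log_le_iff_le_exp ht0).2 ht
  have hkey := key (Real.log t) hsM
  rw [hg] at hkey
  simp only [Real.exp_log ht0] at hkey
  have heq : Real.log t ^ 2 * t / (M + 2) = 1 / (M + 2) * (t * Real.log t ^ 2) := by
    field_simp
  linarith [heq ▸ hkey]
end

section
/- For every partial boolean function f : {0,1}^n → {0,1,*}, every balanced input distribution D = ½D0 + ½D1 for f, and every ε ∈ (0,1/2): bicorr_ε(f,D) ≤ sel_ε(f,D). -/
open Finset

namespace SB15

def remap {α ι ι' β β' : Type} (φ : ι → ι') (ψ : β → β') : DTree α ι β → DTree α ι' β'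
  | .leaf b => .leaf (ψ b)
  | .node i ch => .node (φ i) (fun a => remap φ ψ (ch a))

lemma remap_eval {α ι ι' β β' : Type} (φ : ι → ι') (ψ : β → β') (T : DTree α ι β)
    (x : ι' → α) : (remap φ ψ T).eval x = ψ (T.eval (fun i => x (φ i))) := by
  induction T with
  | leaf b => rfl
  | node i ch ih => simp [remap, DTree.eval, ih]

lemma remap_depth {α ι ι' β β' : Type} [Fintype α] (φ : ι → ι') (ψ : β → β')
    (T : DTree α ι β) : (remap φ ψ T).depth = T.depth := by
  induction T with
  | leaf b => rfl
  | node i ch ih =>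
    simp only [remap, DTree.depth]
    congr 1
    exact Finset.sup_congr rfl (fun a _ => ih a)

def bigT {ι β : Type} [DecidableEq ι] : List ι → ((ι → Bool) → β) → DTree Bool ι β
  | [], F => .leaf (F fun _ => false)
  | i :: L, F => .node i fun a => bigT L (fun y => F (Function.update y i a))

lemma bigT_depth {ι β : Type} [DecidableEq ι] (L : List ι) (F : (ι → Bool) → β) :
    (bigT L F).depth ≤ L.length := by
  induction L generalizing F with
  | nil => exact le_refl 0
  | cons i L ih =>
    simp only [bigT, DTree.depth, List.length_cons]
    rw [add_comm (L.length) 1]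
    exact Nat.add_le_add_left (Finset.sup_le fun a _ => ih _) 1

lemma bigT_eval {ι β : Type} [DecidableEq ι] (L : List ι) (F : (ι → Bool) → β)
    (x : ι → Bool) : (bigT L F).eval x = F (fun j => if j ∈ L then x j else false) := by
  induction L generalizing F with
  | nil => simp [bigT, DTree.eval]
  | cons i L ih =>
    simp only [bigT, DTree.eval, ih]
    congr 1
    funext j
    by_cases h : j = i
    · subst h; simp [Function.update_apply]
    · simp [Function.update_apply, h]

end SB15

namespace SB15

open scoped Classical in
lemma prS_eq {γ : Type} [Fintype γ] (D : γ → ℝ) (S : Set γ) :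
    prS D S = ∑ x, if x ∈ S then D x else 0 := by
  simp [prS, Set.indicator_apply]

lemma sum_pi_prod {k : ℕ} {β : Type} [Fintype β] [DecidableEq β] (H : Fin k → β → ℝ) :
    ∑ d : Fin k → β, ∏ j, H j (d j) = ∏ j, ∑ b, H j b := by
  rw [Finset.prod_univ_sum]
  rw [Fintype.piFinset_univ]

lemma sum_prod_eq {k n : ℕ} (F : Fin k → (Fin n → Bool) → ℝ) :
    ∑ y : (Fin k × Fin n) → Bool, ∏ j, F j (fun i => y (j, i)) = ∏ j, ∑ w, F j w := by
  rw [← sum_pi_prod F]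
  exact Fintype.sum_equiv (Equiv.curry (Fin k) (Fin n) Bool) _ _ (fun y => rfl)

/-- selector distribution -/
noncomputable def EB {n : ℕ} (D0 D1 : (Fin n → Bool) → ℝ) (b : Bool) :
    (Fin n → Bool) → ℝ := if b then D1 else D0

noncomputable def mixD {n k : ℕ} (D0 D1 : (Fin n → Bool) → ℝ) (d : Fin k → Bool) :
    ((Fin k × Fin n) → Bool) → ℝ :=
  fun y => ∏ j, EB D0 D1 (d j) (fun i => y (j, i))

lemma mixD_nonneg {n k : ℕ} {D0 D1 : (Fin n → Bool) → ℝ} (h0 : IsDist D0) (h1 : IsDist D1)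
    (d : Fin k → Bool) (y : (Fin k × Fin n) → Bool) : 0 ≤ mixD D0 D1 d y := by
  refine Finset.prod_nonneg fun j _ => ?_
  cases hd : d j <;> simp [EB, h0.1, h1.1]

lemma mixD_sum {n k : ℕ} {D0 D1 : (Fin n → Bool) → ℝ} (h0 : IsDist D0) (h1 : IsDist D1)
    (d : Fin k → Bool) : ∑ y : (Fin k × Fin n) → Bool, mixD D0 D1 d y = 1 := by
  unfold mixD
  rw [sum_prod_eq]
  refine Finset.prod_eq_one fun j _ => ?_
  cases hd : d j <;> simp [EB, h0.2, h1.2]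

def t2 (b : Bool) : Fin 2 := if b then 1 else 0

def φm {n k : ℕ} (s : Fin k → Bool) (p : Fin k × Fin n) : Fin k × Fin 2 × Fin n :=
  (p.1, t2 (s p.1), p.2)

def gmap {n k : ℕ} (s : Fin k → Bool) (x : (Fin k × Fin 2 × Fin n) → Bool) :
    (Fin k × Fin n) → Bool := fun p => x (φm s p)

def hmap {n k : ℕ} (s : Fin k → Bool) (x : (Fin k × Fin 2 × Fin n) → Bool) :
    (Fin k × Fin n) → Bool := fun p => x (p.1, t2 (!(s p.1)), p.2)

lemma t2_cases (b : Bool) (t : Fin 2) : t = t2 b ∨ t = t2 (!b) := by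
  revert t b; decide

lemma t2_ne (b : Bool) : t2 (!b) ≠ t2 b := by cases b <;> decide

def esplit {n k : ℕ} (s : Fin k → Bool) :
    ((Fin k × Fin 2 × Fin n) → Bool) ≃ (((Fin k × Fin n) → Bool) × ((Fin k × Fin n) → Bool)) where
  toFun x := (gmap s x, hmap s x)
  invFun yz := fun p => if p.2.1 = t2 (s p.1) then yz.1 (p.1, p.2.2) else yz.2 (p.1, p.2.2)
  left_inv x := by
    funext p
    obtain ⟨j, t, i⟩ := p
    by_cases h : t = t2 (s j)
    · simp [gmap, φm, h]
    · rcases t2_cases (s j) t with h' | h'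
      · exact absurd h' h
      · simp [hmap, h', t2_ne]
  right_inv yz := by
    ext p <;> obtain ⟨j, i⟩ := p
    · simp [gmap, φm]
    · simp [hmap, t2_ne]

lemma split_sum {n k : ℕ} (s : Fin k → Bool) (F G : ((Fin k × Fin n) → Bool) → ℝ) :
    ∑ x : (Fin k × Fin 2 × Fin n) → Bool, F (gmap s x) * G (hmap s x)
      = (∑ y, F y) * (∑ z, G z) := by
  calc ∑ x : (Fin k × Fin 2 × Fin n) → Bool, F (gmap s x) * G (hmap s x)
      = ∑ p : ((Fin k × Fin n) → Bool) × ((Fin k × Fin n) → Bool), F p.1 * G p.2 :=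
        Fintype.sum_equiv (esplit s) _ _ (fun x => rfl)
    _ = (∑ y, F y) * (∑ z, G z) := by
        rw [Finset.sum_mul_sum, Fintype.sum_prod_type]

lemma factorize {n k : ℕ} (D0 D1 : (Fin n → Bool) → ℝ) (c : Bool) (s : Fin k → Bool)
    (x : (Fin k × Fin 2 × Fin n) → Bool) :
    prodD2 (EB D0 D1 c) (EB D0 D1 (!c)) x
      = mixD D0 D1 (fun j => xor c (s j)) (gmap s x)
          * mixD D0 D1 (fun j => xor (!c) (s j)) (hmap s x) := by
  unfold prodD2 mixD
  rw [← Finset.prod_mul_distrib]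
  refine Finset.prod_congr rfl fun j _ => ?_
  cases c <;> cases hsj : s j <;>
    simp [EB, gmap, hmap, φm, t2, hsj, mul_comm]

end SB15

namespace SB15

@[simp] lemma EB_false {n : ℕ} (D0 D1 : (Fin n → Bool) → ℝ) : EB D0 D1 false = D0 := rfl
@[simp] lemma EB_true {n : ℕ} (D0 D1 : (Fin n → Bool) → ℝ) : EB D0 D1 true = D1 := rfl

lemma mix_support {n k : ℕ} {f : (Fin n → Bool) → Option Bool} {D0 D1 : (Fin n → Bool) → ℝ}
    (hD : BalancedDist f D0 D1) (d : Fin k → Bool) (y : (Fin k × Fin n) → Bool)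
    (hy : mixD D0 D1 d y ≠ 0) (j : Fin k) : f (fun i => y (j, i)) = some (d j) := by
  have hj : EB D0 D1 (d j) (fun i => y (j, i)) ≠ 0 := by
    intro h
    exact hy (Finset.prod_eq_zero (Finset.mem_univ j) h)
  cases hdj : d j
  · rw [hdj] at hj; exact hD.2.2.1 _ (by simpa using hj)
  · rw [hdj] at hj; exact hD.2.2.2 _ (by simpa using hj)

lemma remap_eval' {n k : ℕ} {β' : Type} (s : Fin k → Bool)
    (ψ : Fin k × Bool → β') (T : DTree Bool (Fin k × Fin n) (Fin k × Bool))
    (x : (Fin k × Fin 2 × Fin n) → Bool) :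
    (remap (φm s) ψ T).eval x = ψ (T.eval (gmap s x)) := remap_eval _ _ _ _

set_option maxHeartbeats 1000000 in
lemma winprob {n k : ℕ} {f : (Fin n → Bool) → Option Bool} {D0 D1 : (Fin n → Bool) → ℝ}
    (hD : BalancedDist f D0 D1) (T : DTree Bool (Fin k × Fin n) (Fin k × Bool))
    (s : Fin k → Bool) (c : Bool) :
    prS (mixD D0 D1 (fun j => xor c (s j)))
        {y | f (fun i => y ((T.eval y).1, i)) = some (T.eval y).2}
      ≤ prS (prodD2 (EB D0 D1 c) (EB D0 D1 (!c)))
          {x | (remap (φm s) (fun p : Fin k × Bool => xor p.2 (s p.1)) T).eval x = c} := by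
  have h0 := hD.1
  have h1 := hD.2.1
  have hstep : prS (prodD2 (EB D0 D1 c) (EB D0 D1 (!c)))
      {x | (remap (φm s) (fun p : Fin k × Bool => xor p.2 (s p.1)) T).eval x = c}
      = ∑ y : (Fin k × Fin n) → Bool,
          Set.indicator {y : (Fin k × Fin n) → Bool | xor (T.eval y).2 (s (T.eval y).1) = c}
            (mixD D0 D1 (fun j => xor c (s j))) y := by
    unfold prS
    have e1 : ∀ x : (Fin k × Fin 2 × Fin n) → Bool,
        Set.indicator {x | (remap (φm s) (fun p : Fin k × Bool => xor p.2 (s p.1)) T).eval x = c}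
          (prodD2 (EB D0 D1 c) (EB D0 D1 (!c))) x
        = Set.indicator {y : (Fin k × Fin n) → Bool | xor (T.eval y).2 (s (T.eval y).1) = c}
            (mixD D0 D1 (fun j => xor c (s j))) (gmap s x)
          * mixD D0 D1 (fun j => xor (!c) (s j)) (hmap s x) := by
      intro x
      by_cases hx : x ∈ {x | (remap (φm s) (fun p : Fin k × Bool => xor p.2 (s p.1)) T).eval x = c}
      · have hx' : gmap s x ∈
            {y : (Fin k × Fin n) → Bool | xor (T.eval y).2 (s (T.eval y).1) = c} := by
          have := hx
          rw [Set.mem_setOf_eq, remap_eval'] at this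
          exact this
        rw [Set.indicator_of_mem hx, Set.indicator_of_mem hx', factorize D0 D1 c s x]
      · have hx' : gmap s x ∉
            {y : (Fin k × Fin n) → Bool | xor (T.eval y).2 (s (T.eval y).1) = c} := by
          intro hmem
          apply hx
          rw [Set.mem_setOf_eq, remap_eval']
          exact hmem
        rw [Set.indicator_of_notMem hx, Set.indicator_of_notMem hx', zero_mul]
    calc ∑ x, Set.indicator
            {x | (remap (φm s) (fun p : Fin k × Bool => xor p.2 (s p.1)) T).eval x = c}
            (prodD2 (EB D0 D1 c) (EB D0 D1 (!c))) x
        = ∑ x : (Fin k × Fin 2 × Fin n) → Bool,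
            Set.indicator {y : (Fin k × Fin n) → Bool | xor (T.eval y).2 (s (T.eval y).1) = c}
              (mixD D0 D1 (fun j => xor c (s j))) (gmap s x)
            * mixD D0 D1 (fun j => xor (!c) (s j)) (hmap s x) :=
          Finset.sum_congr rfl fun x _ => e1 x
      _ = (∑ y : (Fin k × Fin n) → Bool,
            Set.indicator {y : (Fin k × Fin n) → Bool | xor (T.eval y).2 (s (T.eval y).1) = c}
              (mixD D0 D1 (fun j => xor c (s j))) y)
            * (∑ z, mixD D0 D1 (fun j => xor (!c) (s j)) z) :=
          split_sum s _ _
      _ = _ := by rw [mixD_sum h0 h1, mul_one]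
  rw [hstep]
  unfold prS
  refine Finset.sum_le_sum fun y _ => ?_
  by_cases hg : y ∈ {y : (Fin k × Fin n) → Bool |
      f (fun i => y ((T.eval y).1, i)) = some (T.eval y).2}
  · rw [Set.indicator_of_mem hg]
    by_cases hm : mixD D0 D1 (fun j => xor c (s j)) y = 0
    · rw [hm]
      exact Set.indicator_nonneg (fun z _ => mixD_nonneg h0 h1 _ z) y
    · have hb : (T.eval y).2 = xor c (s (T.eval y).1) := by
        have := mix_support hD (fun j => xor c (s j)) y hm (T.eval y).1
        rw [Set.mem_setOf_eq] at hg
        rw [hg] at this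
        exact Option.some_injective _ this
      have hxor : y ∈ {y : (Fin k × Fin n) → Bool | xor (T.eval y).2 (s (T.eval y).1) = c} := by
        rw [Set.mem_setOf_eq, hb]
        cases c <;> cases hsi : s (T.eval y).1 <;> simp [hsi]
      rw [Set.indicator_of_mem hxor]
  · rw [Set.indicator_of_notMem hg]
    exact Set.indicator_nonneg (fun z _ => mixD_nonneg h0 h1 _ z) y

lemma selSet_nonempty {n : ℕ} (f : (Fin n → Bool) → Option Bool)
    (D0 D1 : (Fin n → Bool) → ℝ) (hD : BalancedDist f D0 D1) (ε : ℝ) (hε0 : 0 < ε) :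
    {q | ∃ k, 0 < k ∧ ∃ T : DTree Bool (Fin k × Fin n) (Fin k × Bool), T.depth ≤ q ∧
      1 - ε ≤ prS (prodD (fun x => (D0 x + D1 x) / 2))
        {x | f (fun i => x ((T.eval x).1, i)) = some (T.eval x).2}}.Nonempty := by
  classical
  set D : (Fin n → Bool) → ℝ := fun x => (D0 x + D1 x) / 2 with hDdef
  set T0 : DTree Bool (Fin 1 × Fin n) (Fin 1 × Bool) :=
    bigT ((Finset.univ : Finset (Fin 1 × Fin n)).toList)
      (fun y => ((0 : Fin 1), (f fun i => y (0, i)).getD false)) with hT0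
  have heval : ∀ x, T0.eval x = ((0 : Fin 1), (f fun i => x (0, i)).getD false) := by
    intro x
    rw [hT0, bigT_eval]
    simp [Finset.mem_toList]
  refine ⟨T0.depth, 1, one_pos, T0, le_refl _, ?_⟩
  have hone : prS (prodD D)
      {x : (Fin 1 × Fin n) → Bool |
        f (fun i => x ((T0.eval x).1, i)) = some (T0.eval x).2} = 1 := by
    unfold prS
    have hall : ∀ x : (Fin 1 × Fin n) → Bool,
        Set.indicator {x : (Fin 1 × Fin n) → Bool |
          f (fun i => x ((T0.eval x).1, i)) = some (T0.eval x).2} (prodD D) x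
        = prodD D x := by
      intro x
      by_cases hp : prodD D x = 0
      · by_cases hxS : x ∈ {x : (Fin 1 × Fin n) → Bool |
            f (fun i => x ((T0.eval x).1, i)) = some (T0.eval x).2}
        · rw [Set.indicator_of_mem hxS]
        · rw [Set.indicator_of_notMem hxS, hp]
      · have hD0 : D (fun i => x (0, i)) ≠ 0 := by
          unfold prodD at hp
          rwa [Fin.prod_univ_one] at hp
        have hor : D0 (fun i => x (0, i)) ≠ 0 ∨ D1 (fun i => x (0, i)) ≠ 0 := by
          by_contra h
          push_neg at h
          exact hD0 (by simp [hDdef, h.1, h.2])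
        obtain ⟨b, hb⟩ : ∃ b, f (fun i => x ((0 : Fin 1), i)) = some b := by
          rcases hor with h | h
          · exact ⟨false, hD.2.2.1 _ h⟩
          · exact ⟨true, hD.2.2.2 _ h⟩
        have hxS : x ∈ {x : (Fin 1 × Fin n) → Bool |
            f (fun i => x ((T0.eval x).1, i)) = some (T0.eval x).2} := by
          rw [Set.mem_setOf_eq, heval x]
          simp only
          rw [hb]
          simp
        rw [Set.indicator_of_mem hxS]
    rw [Finset.sum_congr rfl fun x _ => hall x]
    unfold prodD
    rw [sum_prod_eq]
    have : ∑ w, D w = 1 := by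
      simp only [hDdef]
      rw [← Finset.sum_div, Finset.sum_add_distrib, hD.1.2, hD.2.1.2]
      norm_num
    rw [Finset.prod_congr rfl fun j _ => this]
    simp
  rw [hone]
  linarith

end SB15

open SB15

/-- `bicorr_ε(f,D) ≤ sel_ε(f,D)` for every partial boolean `f`, every
balanced input distribution `D = ½D0 + ½D1` for `f`, and every `ε ∈ (0, 1/2)`. -/
theorem bicorr_le_sel {n : ℕ} (f : (Fin n → Bool) → Option Bool)
    (D0 D1 : (Fin n → Bool) → ℝ) (hD : BalancedDist f D0 D1)
    (ε : ℝ) (hε0 : 0 < ε) (hε : ε < 1/2) :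
    bicorrC ε D0 D1 ≤ selC ε f fun x => (D0 x + D1 x) / 2 := by
  classical
  have h0 := hD.1
  have h1 := hD.2.1
  have hne := selSet_nonempty f D0 D1 hD ε hε0
  have hmem := Nat.sInf_mem hne
  obtain ⟨k, hk, T, hdep, hsucc⟩ := hmem
  -- abbreviations
  have hGsum : ∑ sg : Fin k → Bool,
      prS (mixD D0 D1 sg)
        {y : (Fin k × Fin n) → Bool | f (fun i => y ((T.eval y).1, i)) = some (T.eval y).2}
      = 2 ^ k * prS (prodD (fun x => (D0 x + D1 x) / 2))
        {y : (Fin k × Fin n) → Bool | f (fun i => y ((T.eval y).1, i)) = some (T.eval y).2} := by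
    have hmix2 : ∀ y : (Fin k × Fin n) → Bool,
        ∑ sg : Fin k → Bool, mixD D0 D1 sg y
          = 2 ^ k * prodD (fun x => (D0 x + D1 x) / 2) y := by
      intro y
      unfold mixD prodD
      rw [sum_pi_prod (fun j b => EB D0 D1 b (fun i => y (j, i)))]
      calc ∏ j, ∑ b, EB D0 D1 b (fun i => y (j, i))
          = ∏ j : Fin k, (2 * ((D0 (fun i => y (j, i)) + D1 (fun i => y (j, i))) / 2)) :=
            Finset.prod_congr rfl fun j _ => by
              rw [Fintype.sum_bool]
              simp only [EB_true, EB_false]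
              ring
        _ = 2 ^ k * ∏ j : Fin k, (D0 (fun i => y (j, i)) + D1 (fun i => y (j, i))) / 2 := by
            rw [Finset.prod_mul_distrib, Finset.prod_const]
            simp [Finset.card_univ]
    unfold prS
    rw [Finset.sum_comm, Finset.mul_sum]
    refine Finset.sum_congr rfl fun y _ => ?_
    by_cases hy : y ∈ {y : (Fin k × Fin n) → Bool |
        f (fun i => y ((T.eval y).1, i)) = some (T.eval y).2}
    · simp only [Set.indicator_of_mem hy]
      exact hmix2 y
    · simp only [Set.indicator_of_notMem hy]
      simp
  have hneg : ∑ sg : Fin k → Bool,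
      prS (mixD D0 D1 (fun j => xor true (sg j)))
        {y : (Fin k × Fin n) → Bool | f (fun i => y ((T.eval y).1, i)) = some (T.eval y).2}
      = ∑ sg : Fin k → Bool, prS (mixD D0 D1 sg)
        {y : (Fin k × Fin n) → Bool | f (fun i => y ((T.eval y).1, i)) = some (T.eval y).2} := by
    refine Fintype.sum_bijective (fun sg : Fin k → Bool => fun j => xor true (sg j))
      (Function.Involutive.bijective fun sg => by funext j; simp) _ _ (fun sg => rfl)
  have hpos : ∑ sg : Fin k → Bool,
      prS (mixD D0 D1 (fun j => xor false (sg j)))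
        {y : (Fin k × Fin n) → Bool | f (fun i => y ((T.eval y).1, i)) = some (T.eval y).2}
      = ∑ sg : Fin k → Bool, prS (mixD D0 D1 sg)
        {y : (Fin k × Fin n) → Bool | f (fun i => y ((T.eval y).1, i)) = some (T.eval y).2} := by
    refine Finset.sum_congr rfl fun sg _ => ?_
    simp [Bool.false_xor]
  have key : (2 ^ k : ℝ) * (1 - ε) ≤ ∑ sg : Fin k → Bool,
      (prS (prodD2 D0 D1)
          {x | (remap (φm sg) (fun p : Fin k × Bool => xor p.2 (sg p.1)) T).eval x = false}
        + prS (prodD2 D1 D0)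
          {x | (remap (φm sg) (fun p : Fin k × Bool => xor p.2 (sg p.1)) T).eval x = true}) / 2 := by
    calc (2 ^ k : ℝ) * (1 - ε)
        ≤ 2 ^ k * prS (prodD (fun x => (D0 x + D1 x) / 2))
            {y : (Fin k × Fin n) → Bool |
              f (fun i => y ((T.eval y).1, i)) = some (T.eval y).2} :=
          mul_le_mul_of_nonneg_left hsucc (by positivity)
      _ = ∑ sg : Fin k → Bool, prS (mixD D0 D1 sg)
            {y : (Fin k × Fin n) → Bool |
              f (fun i => y ((T.eval y).1, i)) = some (T.eval y).2} := hGsum.symm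
      _ = ∑ sg : Fin k → Bool,
            (prS (mixD D0 D1 (fun j => xor false (sg j)))
              {y : (Fin k × Fin n) → Bool |
                f (fun i => y ((T.eval y).1, i)) = some (T.eval y).2}
            + prS (mixD D0 D1 (fun j => xor true (sg j)))
              {y : (Fin k × Fin n) → Bool |
                f (fun i => y ((T.eval y).1, i)) = some (T.eval y).2}) / 2 := by
          rw [← Finset.sum_div, Finset.sum_add_distrib, hpos, hneg]
          ring
      _ ≤ _ := by
          refine Finset.sum_le_sum fun sg _ => ?_
          have w0 := winprob hD T sg false
          have w1 := winprob hD T sg true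
          simp only [EB_false, EB_true, Bool.not_false, Bool.not_true] at w0 w1
          linarith
  have hconst : ∑ _sg : Fin k → Bool, (1 - ε) = (2 ^ k : ℝ) * (1 - ε) := by
    rw [Finset.sum_const, Finset.card_univ, nsmul_eq_mul]
    congr 1
    simp [Fintype.card_fun]
  obtain ⟨sg, -, hs⟩ := Finset.exists_le_of_sum_le (f := fun _ : Fin k → Bool => 1 - ε)
    (g := fun sg : Fin k → Bool =>
      (prS (prodD2 D0 D1)
          {x | (remap (φm sg) (fun p : Fin k × Bool => xor p.2 (sg p.1)) T).eval x = false}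
        + prS (prodD2 D1 D0)
          {x | (remap (φm sg) (fun p : Fin k × Bool => xor p.2 (sg p.1)) T).eval x = true}) / 2)
    Finset.univ_nonempty (by rw [hconst]; exact key)
  exact Nat.sInf_le ⟨k, hk, remap (φm sg) (fun p : Fin k × Bool => xor p.2 (sg p.1)) T,
    by rw [remap_depth]; exact hdep, hs⟩
end
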